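/- Let X and Y be independent random variables, each exponentially distributed with rate 1, let R > 0 and ρ > 0. Then P(e^{2R} Y ≤ X ≤ e^R(e^R − 1)/ρ) = (1/(1 + e^{2R}))·(1 − e^{−(1+e^{2R})·e^{−R}(e^R−1)/ρ}) − e^{−e^R(e^R−1)/ρ}·(1 − e^{−e^{−R}(e^R−1)/ρ}). -/

import Mathlib

open MeasureTheory ProbabilityTheory

open scoped ENNReal

private lemma exp_integral_aux {d T : ℝ} (hd : d ≠ 0) :
    ∫ x in (0:ℝ)..T, Real.exp (d * x) = (Real.exp (d * T) - 1) / d := by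
  rw [intervalIntegral.integral_comp_mul_left (fun x => Real.exp x) hd, mul_zero,
    integral_exp, Real.exp_zero, smul_eq_mul]
  field_simp

/-- The pure-NOMA power outage probability in the two-user case: if `X = h_{2,1}` and
`Y = h_{2,2}` are i.i.d. rate-1 exponential channel gains, then
`P(e^{2R} Y ≤ X ≤ e^R(e^R - 1)/ρ)` equals the displayed closed form. -/
theorem stmt_8 {Ω : Type*} [MeasurableSpace Ω] (μ : Measure Ω) [IsProbabilityMeasure μ]
    (X Y : Ω → ℝ) (hX : Measurable X) (hY : Measurable Y) (hXY : IndepFun X Y μ)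
    (hXd : μ.map X = expMeasure 1) (hYd : μ.map Y = expMeasure 1)
    (R ρ : ℝ) (hR : 0 < R) (hρ : 0 < ρ) :
    μ {ω | Real.exp (2 * R) * Y ω ≤ X ω ∧
           X ω ≤ Real.exp R * (Real.exp R - 1) / ρ} =
      ENNReal.ofReal
        (1 / (1 + Real.exp (2 * R)) *
            (1 - Real.exp (-((1 + Real.exp (2 * R)) *
              (Real.exp (-R) * (Real.exp R - 1) / ρ)))) -
          Real.exp (-(Real.exp R * (Real.exp R - 1) / ρ)) *
            (1 - Real.exp (-(Real.exp (-R) * (Real.exp R - 1) / ρ)))) := by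
  have hs1 : (1:ℝ) < Real.exp R := by
    rw [← Real.exp_zero]; exact Real.exp_lt_exp.mpr hR
  set a : ℝ := Real.exp (2 * R) with ha_def
  set b : ℝ := Real.exp R * (Real.exp R - 1) / ρ with hb_def
  have ha : 0 < a := Real.exp_pos _
  have hb : 0 < b := div_pos (mul_pos (Real.exp_pos _) (by linarith)) hρ
  have hexpR : Real.exp R ≠ 0 := (Real.exp_pos R).ne'
  have haeq : a = Real.exp R * Real.exp R := by
    rw [ha_def, two_mul, Real.exp_add]
  have hba : b / a = Real.exp (-R) * (Real.exp R - 1) / ρ := by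
    rw [hb_def, haeq, Real.exp_neg]
    field_simp
  clear_value a b
  haveI : IsProbabilityMeasure (expMeasure 1) := isProbabilityMeasure_expMeasure one_pos
  set S : Set (ℝ × ℝ) := {p | a * p.2 ≤ p.1 ∧ p.1 ≤ b} with hS_def
  have hS : MeasurableSet S :=
    (measurableSet_le (measurable_snd.const_mul a) measurable_fst).inter
      (measurableSet_le measurable_fst measurable_const)
  have hmap : μ {ω | a * Y ω ≤ X ω ∧ X ω ≤ b}
      = ((expMeasure 1).prod (expMeasure 1)) S := by
    have hpr := (indepFun_iff_map_prod_eq_prod_map_map hX.aemeasurable hY.aemeasurable).mp hXY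
    rw [hXd, hYd] at hpr
    rw [← hpr, Measure.map_apply (hX.prodMk hY) hS]
    rfl
  rw [hmap, Measure.prod_apply hS]
  set g : ℝ → ℝ≥0∞ := fun x =>
    if x ≤ b then ENNReal.ofReal (if 0 ≤ x then 1 - Real.exp (-(x / a)) else 0) else 0
    with hg_def
  have hslice : ∀ x : ℝ, expMeasure 1 (Prod.mk x ⁻¹' S) = g x := by
    intro x
    by_cases hxb : x ≤ b
    · have hpre : Prod.mk x ⁻¹' S = Set.Iic (x / a) := by
        ext y
        simp only [Set.mem_preimage, hS_def, Set.mem_setOf_eq, Set.mem_Iic]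
        constructor
        · rintro ⟨h1, _⟩
          rw [le_div_iff₀ ha, mul_comm]; exact h1
        · intro h
          refine ⟨?_, hxb⟩
          rw [le_div_iff₀ ha, mul_comm] at h; exact h
      have key := lintegral_exponentialPDF_eq_antiDeriv one_pos (x / a)
      have hmeq : expMeasure 1 (Set.Iic (x / a))
          = ∫⁻ y in Set.Iic (x / a), exponentialPDF 1 y := by
        rw [expMeasure, gammaMeasure, withDensity_apply _ measurableSet_Iic]
        rfl
      rw [hpre, hmeq, key, hg_def]
      simp only [if_pos hxb, one_mul]
      congr 1
      by_cases hx : 0 ≤ x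
      · rw [if_pos hx, if_pos (div_nonneg hx ha.le)]
      · rw [if_neg hx, if_neg (fun h => hx (by
          have := (le_div_iff₀ ha).mp h
          simpa using this))]
    · have hpre : Prod.mk x ⁻¹' S = ∅ := by
        ext y
        simp only [Set.mem_preimage, hS_def, Set.mem_setOf_eq, Set.mem_empty_iff_false,
          iff_false, not_and]
        exact fun _ => hxb
      rw [hpre, hg_def]
      simp [hxb]
  rw [lintegral_congr hslice]
  have hpdf_meas : Measurable (exponentialPDF 1) := fun s hs => by
    exact (measurable_exponentialPDFReal 1).ennreal_ofReal hs
  have hg_meas : Measurable g := by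
    apply Measurable.ite measurableSet_Iic _ measurable_const
    apply Measurable.ennreal_ofReal
    exact Measurable.ite measurableSet_Ici
      ((continuous_const.sub ((continuous_id.div_const a).neg.rexp)).measurable)
      measurable_const
  have hexp_meas_eq : expMeasure 1 = volume.withDensity (exponentialPDF 1) := rfl
  rw [hexp_meas_eq, lintegral_withDensity_eq_lintegral_mul volume hpdf_meas hg_meas]
  set f : ℝ → ℝ := fun x => Real.exp (-x) * (1 - Real.exp (-(x / a))) with hf_def
  have hpt : ∀ x, (exponentialPDF 1 * g) x
      = Set.indicator (Set.Icc 0 b) (fun x => ENNReal.ofReal (f x)) x := by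
    intro x
    simp only [Pi.mul_apply]
    rcases le_or_gt 0 x with hx | hx
    · rcases le_or_gt x b with hxb | hxb
      · rw [Set.indicator_of_mem (Set.mem_Icc.mpr ⟨hx, hxb⟩), exponentialPDF_of_nonneg hx, hg_def]
        simp only [if_pos hxb, if_pos hx, one_mul]
        rw [← ENNReal.ofReal_mul (by positivity), hf_def]
      · rw [Set.indicator_of_notMem (fun h => absurd h.2 hxb.not_ge), hg_def]
        simp [hxb.not_ge]
    · rw [Set.indicator_of_notMem (fun h => absurd h.1 hx.not_ge),
        exponentialPDF_of_neg hx, zero_mul]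
  rw [lintegral_congr hpt, lintegral_indicator measurableSet_Icc]
  have hcont : Continuous f := by
    rw [hf_def]
    exact (continuous_neg.rexp).mul
      (continuous_const.sub ((continuous_id.div_const a).neg.rexp))
  have hlint : ∫⁻ x in Set.Icc 0 b, ENNReal.ofReal (f x)
      = ENNReal.ofReal (∫ x in Set.Icc 0 b, f x) := by
    rw [← ofReal_integral_eq_lintegral_ofReal (hcont.integrableOn_Icc)]
    filter_upwards [ae_restrict_mem measurableSet_Icc] with x hx
    have h1 : Real.exp (-(x / a)) ≤ 1 := by
      rw [Real.exp_le_one_iff]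
      have : 0 ≤ x / a := div_nonneg hx.1 ha.le
      linarith
    have := Real.exp_pos (-x)
    rw [hf_def]
    have : (0:ℝ) ≤ 1 - Real.exp (-(x / a)) := by linarith
    positivity
  rw [hlint]
  set c : ℝ := (1 + a) / a with hc_def
  clear_value c
  have hc : 0 < c := by rw [hc_def]; exact div_pos (by linarith) ha
  have hfx : ∀ x, f x = Real.exp ((-1) * x) - Real.exp ((-c) * x) := by
    intro x
    rw [hf_def]
    have harg : -x + -(x / a) = (-c) * x := by
      rw [hc_def]; field_simp; try ring
    simp only [mul_sub, mul_one, ← Real.exp_add, harg, neg_one_mul]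
  have hintval : ∫ x in Set.Icc 0 b, f x
      = (1 - Real.exp (-b)) - (1 - Real.exp (-(c * b))) / c := by
    rw [integral_Icc_eq_integral_Ioc, ← intervalIntegral.integral_of_le hb.le]
    have h1 : IntervalIntegrable (fun x => Real.exp ((-1) * x)) volume 0 b :=
      (Real.continuous_exp.comp (continuous_const.mul continuous_id)).intervalIntegrable 0 b
    have h2 : IntervalIntegrable (fun x => Real.exp ((-c) * x)) volume 0 b :=
      (Real.continuous_exp.comp (continuous_const.mul continuous_id)).intervalIntegrable 0 b
    rw [intervalIntegral.integral_congr (fun x _ => hfx x),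
      intervalIntegral.integral_sub h1 h2,
      exp_integral_aux (by norm_num : (-1:ℝ) ≠ 0),
      exp_integral_aux (neg_ne_zero.mpr hc.ne')]
    rw [neg_one_mul, neg_mul]
    field_simp [hc.ne']
    try ring
  rw [hintval, ← hba]
  congr 1
  have harg1 : (1 + a) * (b / a) = c * b := by
    rw [hc_def]; field_simp; try ring
  rw [harg1]
  have hE1 : Real.exp (-(c * b)) = Real.exp (-b) * Real.exp (-(b / a)) := by
    rw [← Real.exp_add]
    congr 1
    rw [hc_def]; field_simp; try ring
  rw [hE1]
  have hA : (1:ℝ) + a ≠ 0 := by positivity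
  have hcval : c = (1 + a) / a := hc_def
  rw [hcval]
  field_simp
  try ring
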